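/- Let G be a graph, opt the minimum size of an odd cycle transversal of G, 𝒯 a collection of pairwise vertex-disjoint triangles in G with |𝒯| = a·opt, and let X₁ be an odd cycle transversal of G − V(𝒯) with |X₁| ≤ ρ₀ · opt(G − V(𝒯)). Then V(𝒯) ∪ X₁ is an odd cycle transversal of G of size at most (3a + ρ₀(1 − a)) · opt. -/

import Mathlib

open Finset

def IsOCT {V : Type*} (G : SimpleGraph V) (S : Set V) : Prop :=
  (G.induce Sᶜ).Colorable 2

def IsTriangle {V : Type*} (G : SimpleGraph V) (T : Finset V) : Prop :=
  T.card = 3 ∧ ∀ u ∈ T, ∀ v ∈ T, u ≠ v → G.Adj u v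

def IsK4 {V : Type*} (G : SimpleGraph V) (K : Finset V) : Prop :=
  K.card = 4 ∧ ∀ u ∈ K, ∀ v ∈ K, u ≠ v → G.Adj u v

def IsPacking {V : Type*} (𝒯 : Finset (Finset V)) : Prop :=
  (𝒯 : Set (Finset V)).Pairwise fun A B => Disjoint A B

lemma oct_mono {V : Type*} (G : SimpleGraph V) {S S' : Set V} (h : S ⊆ S')
    (hS : IsOCT G S) : IsOCT G S' := by
  obtain ⟨C⟩ := hS
  refine ⟨SimpleGraph.Coloring.mk (fun v => C ⟨v.1, fun hv => v.2 (h hv)⟩) ?_⟩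
  intro u v hadj
  exact C.valid hadj

lemma tri_meet {V : Type*} [DecidableEq V] (G : SimpleGraph V) {S : Set V} (hS : IsOCT G S)
    {T : Finset V} (hT : IsTriangle G T) : ∃ v ∈ T, v ∈ S := by
  by_contra hcon
  push_neg at hcon
  obtain ⟨C⟩ := hS
  obtain ⟨hc, hadj⟩ := hT
  rw [Finset.card_eq_three] at hc
  obtain ⟨u, v, w, huv, huw, hvw, hTe⟩ := hc
  subst hTe
  have hu : u ∈ Sᶜ := hcon u (by simp)
  have hv : v ∈ Sᶜ := hcon v (by simp)
  have hw : w ∈ Sᶜ := hcon w (by simp)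
  have h1 : C ⟨u, hu⟩ ≠ C ⟨v, hv⟩ :=
    C.valid (hadj u (by simp) v (by simp) huv)
  have h2 : C ⟨u, hu⟩ ≠ C ⟨w, hw⟩ :=
    C.valid (hadj u (by simp) w (by simp) huw)
  have h3 : C ⟨v, hv⟩ ≠ C ⟨w, hw⟩ :=
    C.valid (hadj v (by simp) w (by simp) hvw)
  have e1 : (C ⟨u, hu⟩).val < 2 := (C ⟨u, hu⟩).2
  have e2 : (C ⟨v, hv⟩).val < 2 := (C ⟨v, hv⟩).2
  have e3 : (C ⟨w, hw⟩).val < 2 := (C ⟨w, hw⟩).2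
  have : (C ⟨u, hu⟩).val = (C ⟨v, hv⟩).val ∨ (C ⟨u, hu⟩).val = (C ⟨w, hw⟩).val ∨
      (C ⟨v, hv⟩).val = (C ⟨w, hw⟩).val := by omega
  rcases this with h | h | h
  · exact h1 (Fin.ext h)
  · exact h2 (Fin.ext h)
  · exact h3 (Fin.ext h)

theorem stmt3 {V : Type*} [DecidableEq V] [Fintype V] (G : SimpleGraph V)
    (opt : ℕ) (hoptex : ∃ S : Finset V, IsOCT G ↑S ∧ S.card = opt)
    (hoptmin : ∀ S : Finset V, IsOCT G ↑S → opt ≤ S.card)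
    (a ρ₀ : ℝ) (hρ₀ : 1 ≤ ρ₀)
    (𝒯 : Finset (Finset V)) (h𝒯 : ∀ T ∈ 𝒯, IsTriangle G T) (hpack : IsPacking 𝒯)
    (ha : (𝒯.card : ℝ) = a * opt)
    (X₁ : Finset V) (hdisj : Disjoint X₁ (𝒯.biUnion id))
    (hX₁ : IsOCT G ↑(X₁ ∪ 𝒯.biUnion id))
    (opt' : ℕ)
    (hopt'ex : ∃ S' : Finset V, Disjoint S' (𝒯.biUnion id) ∧
      IsOCT G ↑(S' ∪ 𝒯.biUnion id) ∧ S'.card = opt')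
    (hopt'min : ∀ S' : Finset V, Disjoint S' (𝒯.biUnion id) →
      IsOCT G ↑(S' ∪ 𝒯.biUnion id) → opt' ≤ S'.card)
    (happx : (X₁.card : ℝ) ≤ ρ₀ * opt') :
    IsOCT G ↑(𝒯.biUnion id ∪ X₁) ∧
      (((𝒯.biUnion id ∪ X₁).card : ℝ) ≤ (3 * a + ρ₀ * (1 - a)) * opt) := by
  constructor
  · rwa [Finset.union_comm]
  -- Take an optimal OCT S of G
  obtain ⟨S, hSoct, hScard⟩ := hoptex
  set W : Finset V := 𝒯.biUnion id with hW
  -- each triangle meets S; choice function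
  have hchoice : ∀ T ∈ 𝒯, ∃ v ∈ T, v ∈ S := fun T hT =>
    tri_meet G hSoct (h𝒯 T hT)
  choose f hfT hfS using hchoice
  -- |𝒯| ≤ |S ∩ W|
  have hcard1 : 𝒯.card ≤ (S ∩ W).card := by
    rcases Finset.eq_empty_or_nonempty 𝒯 with h0 | ⟨T₀, hT₀⟩
    · simp [h0]
    haveI : Nonempty V := ⟨f T₀ hT₀⟩
    apply Finset.card_le_card_of_injOn (fun T => if h : T ∈ 𝒯 then f T h else Classical.arbitrary V)
    · intro T hT
      simp only [Finset.mem_coe] at hT ⊢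
      simp only [dif_pos hT, Finset.mem_inter]
      refine ⟨hfS T hT, ?_⟩
      exact Finset.mem_biUnion.2 ⟨T, hT, hfT T hT⟩
    · intro T hT T' hT' heq
      simp only [Finset.mem_coe] at hT hT'
      simp only [dif_pos hT, dif_pos hT'] at heq
      by_contra hne
      have hd := hpack hT hT' hne
      exact (Finset.disjoint_left.1 hd (hfT T hT)) (heq ▸ hfT T' hT')
  -- S' = S \ W is feasible for opt'
  have hS'disj : Disjoint (S \ W) W := Finset.sdiff_disjoint
  have hsub : (S : Set V) ⊆ ↑((S \ W) ∪ W) := by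
    intro x hx
    simp only [Finset.coe_union, Set.mem_union, Finset.coe_sdiff, Set.mem_diff]
    by_cases hxW : x ∈ W
    · exact Or.inr hxW
    · exact Or.inl ⟨hx, hxW⟩
  have hS'oct : IsOCT G ↑((S \ W) ∪ W) := oct_mono G hsub hSoct
  have hopt'le : opt' ≤ (S \ W).card := hopt'min _ hS'disj hS'oct
  have hkey : opt' + 𝒯.card ≤ opt := by
    have h1 := Finset.card_inter_add_card_sdiff S W
    omega
  -- card of W
  have hWcard : W.card = 3 * 𝒯.card := by
    rw [hW, Finset.card_biUnion]
    · simp only [id]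
      rw [Finset.sum_congr rfl (fun T hT => (h𝒯 T hT).1), Finset.sum_const, smul_eq_mul,
        Nat.mul_comm]
    · intro x hx y hy hxy
      exact hpack hx hy hxy
  have hUcard : (W ∪ X₁).card = W.card + X₁.card :=
    Finset.card_union_of_disjoint hdisj.symm
  -- final arithmetic
  have hopt'R : (opt' : ℝ) ≤ (opt : ℝ) - 𝒯.card := by
    have := hkey
    push_cast
    have : (opt' : ℝ) + 𝒯.card ≤ opt := by exact_mod_cast hkey
    linarith
  have hρpos : (0:ℝ) ≤ ρ₀ := le_trans zero_le_one hρ₀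
  have hX₁R : (X₁.card : ℝ) ≤ ρ₀ * ((opt : ℝ) - 𝒯.card) :=
    le_trans happx (by nlinarith)
  have hcast : ((W ∪ X₁).card : ℝ) = 3 * 𝒯.card + X₁.card := by
    rw [hUcard, hWcard]; push_cast; ring
  rw [hcast]
  nlinarith [hX₁R, ha]
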